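/- arXiv:1108.4762 — 9 statements merged into one kernel-verified Lean document; each statement's English description precedes it below -/
import Mathlib

section
/- Let n ≥ 2 be a natural number and let k be the smallest prime factor of n. Then D(n) ≤ n · log_k(n) / k, with equality if and only if n is a power of k. -/
/-- The arithmetic derivative on `ℕ`: `D p = 1` for primes, `D (a*b) = D a * b + a * D b`;
explicitly `D n = n * Σ αᵢ / pᵢ = Σ αᵢ * (n / pᵢ)` for `n = ∏ pᵢ ^ αᵢ`, and `D 0 = D 1 = 0`. -/
def arithDeriv (n : ℕ) : ℕ := ∑ p ∈ n.primeFactors, n.factorization p * (n / p)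

/-- For `n ≥ 2` with smallest prime factor `k`, `D n ≤ n * log_k n / k`, with equality
iff `n` is a power of `k`. -/
theorem stmt_3 (n : ℕ) (hn : 2 ≤ n) :
    (arithDeriv n : ℝ) ≤ n * Real.logb n.minFac n / n.minFac ∧
    ((arithDeriv n : ℝ) = n * Real.logb n.minFac n / n.minFac ↔
      ∃ e : ℕ, n = n.minFac ^ e) := by
  have hn0 : n ≠ 0 := by omega
  set k := n.minFac with hkdef
  have hk : k.Prime := Nat.minFac_prime (by omega)
  have hk1 : (1:ℝ) < k := by exact_mod_cast hk.one_lt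
  have hkpos : (0:ℝ) < k := by linarith
  have hlogk : 0 < Real.log k := Real.log_pos hk1
  have hnpos : (0:ℝ) < n := by exact_mod_cast (by omega : 0 < n)
  have hkmem : k ∈ n.primeFactors := Nat.mem_primeFactors.mpr ⟨hk, n.minFac_dvd, hn0⟩
  have hn_prod : n = ∏ p ∈ n.primeFactors, p ^ n.factorization p := by
    conv_lhs => rw [← Nat.factorization_prod_pow_eq_self hn0]
    rw [Finsupp.prod, Nat.support_factorization]
  have hlog : Real.log n = ∑ p ∈ n.primeFactors, (n.factorization p : ℝ) * Real.log p := by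
    conv_lhs => rw [hn_prod]
    rw [Nat.cast_prod, Real.log_prod]
    · exact Finset.sum_congr rfl fun p hp => by
        rw [Nat.cast_pow, Real.log_pow]
    · intro p hp
      have hpp := Nat.prime_of_mem_primeFactors hp
      exact Nat.cast_ne_zero.mpr (pow_ne_zero _ hpp.ne_zero)
  have hRHS : (n:ℝ) * Real.logb k n / k
      = ∑ p ∈ n.primeFactors, (n.factorization p : ℝ) * ((n:ℝ) * Real.log p / (Real.log k * k)) := by
    rw [Real.logb, hlog, Finset.sum_div, Finset.mul_sum, Finset.sum_div]
    exact Finset.sum_congr rfl fun p hp => by ring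
  have hLHS : (arithDeriv n : ℝ) = ∑ p ∈ n.primeFactors, (n.factorization p : ℝ) * ((n:ℝ) / p) := by
    rw [arithDeriv, Nat.cast_sum]
    refine Finset.sum_congr rfl fun p hp => ?_
    have hpp := Nat.prime_of_mem_primeFactors hp
    rw [Nat.cast_mul, Nat.cast_div (Nat.dvd_of_mem_primeFactors hp)
      (by exact_mod_cast hpp.ne_zero)]
  have key : ∀ p ∈ n.primeFactors, (n:ℝ) / p ≤ (n:ℝ) * Real.log p / (Real.log k * k) := by
    intro p hp
    have hpp := Nat.prime_of_mem_primeFactors hp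
    have hkp : k ≤ p := Nat.minFac_le_of_dvd hpp.two_le (Nat.dvd_of_mem_primeFactors hp)
    have hpR : (k:ℝ) ≤ p := by exact_mod_cast hkp
    have hppos : (0:ℝ) < p := lt_of_lt_of_le hkpos hpR
    have hlogp : Real.log k ≤ Real.log p := Real.log_le_log hkpos hpR
    have h1 : Real.log k * k ≤ Real.log p * p :=
      mul_le_mul hlogp hpR hkpos.le (hlogk.trans_le hlogp).le
    rw [div_le_div_iff₀ hppos (by positivity)]
    nlinarith [mul_le_mul_of_nonneg_left h1 hnpos.le]
  have keylt : ∀ p ∈ n.primeFactors, p ≠ k →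
      (n:ℝ) / p < (n:ℝ) * Real.log p / (Real.log k * k) := by
    intro p hp hne
    have hpp := Nat.prime_of_mem_primeFactors hp
    have hkp : k < p := lt_of_le_of_ne
      (Nat.minFac_le_of_dvd hpp.two_le (Nat.dvd_of_mem_primeFactors hp)) (Ne.symm hne)
    have hpR : (k:ℝ) < p := by exact_mod_cast hkp
    have hppos : (0:ℝ) < p := lt_trans hkpos hpR
    have hlogp : Real.log k < Real.log p := Real.log_lt_log hkpos hpR
    have h1 : Real.log k * k < Real.log p * p :=
      mul_lt_mul hlogp hpR.le hkpos (hlogk.trans hlogp).le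
    rw [div_lt_div_iff₀ hppos (by positivity)]
    nlinarith [mul_lt_mul_of_pos_left h1 hnpos]
  have hfacpos : ∀ p ∈ n.primeFactors, 0 < (n.factorization p : ℝ) := by
    intro p hp
    exact_mod_cast Nat.Prime.factorization_pos_of_dvd (Nat.prime_of_mem_primeFactors hp) hn0
      (Nat.dvd_of_mem_primeFactors hp)
  have hle : (arithDeriv n : ℝ) ≤ n * Real.logb k n / k := by
    rw [hLHS, hRHS]
    exact Finset.sum_le_sum fun p hp =>
      mul_le_mul_of_nonneg_left (key p hp) (le_of_lt (hfacpos p hp))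
  refine ⟨hle, ?_, ?_⟩
  · intro heq
    by_contra hcon
    push_neg at hcon
    have hsub : n.primeFactors ⊆ {k} := by
      intro p hp
      rw [Finset.mem_singleton]
      by_contra hne
      have hlt : (arithDeriv n : ℝ) < n * Real.logb k n / k := by
        rw [hLHS, hRHS]
        refine Finset.sum_lt_sum (fun q hq => mul_le_mul_of_nonneg_left (key q hq)
          (le_of_lt (hfacpos q hq))) ⟨p, hp, ?_⟩
        exact mul_lt_mul_of_pos_left (keylt p hp hne) (hfacpos p hp)
      linarith
    have hsing : n.primeFactors = {k} :=
      Finset.Subset.antisymm hsub (Finset.singleton_subset_iff.mpr hkmem)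
    refine hcon (n.factorization k) ?_
    conv_lhs => rw [hn_prod]
    rw [hsing, Finset.prod_singleton]
  · rintro ⟨e, he⟩
    have hsing : n.primeFactors = {k} := by
      rw [he]
      have he0 : e ≠ 0 := by rintro rfl; simp at he; omega
      exact Nat.primeFactors_prime_pow he0 hk
    rw [hLHS, hRHS, hsing]
    simp only [Finset.sum_singleton]
    have : (n:ℝ) * Real.log k / (Real.log k * k) = (n:ℝ) / k := by
      field_simp
    rw [this]
end

section
/- Let n ≥ 2 be a natural number which is a product of k primes counted with multiplicity (i.e., Ω(n) = k). Then D(n) ≥ k · n^{(k-1)/k}. -/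
lemma arithDeriv_eq_list_sum (n : ℕ) :
    arithDeriv n = (n.primeFactorsList.map (fun p => n / p)).sum := by
  rw [arithDeriv, Finset.sum_list_map_count]
  refine Finset.sum_congr rfl fun p _ => ?_
  rw [Nat.primeFactorsList_count_eq, smul_eq_mul]

/-- If `n ≥ 2` is a product of `k` primes counted with multiplicity (`Ω n = k`),
then `D n ≥ k * n ^ ((k-1)/k)`. -/
theorem stmt_4 (n k : ℕ) (hn : 2 ≤ n) (hk : n.primeFactorsList.length = k) :
    (k : ℝ) * (n : ℝ) ^ (((k : ℝ) - 1) / k) ≤ arithDeriv n := by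
  subst hk
  set L := n.primeFactorsList with hL
  have hn0 : n ≠ 0 := by omega
  have hnR : (0:ℝ) < n := by exact_mod_cast Nat.pos_of_ne_zero hn0
  set k := L.length with hk
  have hkpos : 0 < k := by
    rcases List.eq_nil_or_concat L with h | ⟨l, a, h⟩
    · exfalso
      have := Nat.prod_primeFactorsList hn0
      rw [← hL, h] at this; simp at this; omega
    · simp [hk, h]
  have hkR : (0:ℝ) < k := by exact_mod_cast hkpos
  have hprime : ∀ i : Fin k, (L.get i).Prime := fun i =>
    Nat.prime_of_mem_primeFactorsList (List.get_mem L ⟨i.1, i.2⟩)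
  have hdvd : ∀ i : Fin k, L.get i ∣ n := fun i =>
    Nat.dvd_of_mem_primeFactorsList (List.get_mem L ⟨i.1, i.2⟩)
  have hpos : ∀ i : Fin k, (0:ℝ) < (L.get i : ℝ) := fun i => by
    exact_mod_cast (hprime i).pos
  -- z i = n / p_i as a real
  set z : Fin k → ℝ := fun i => (n : ℝ) / (L.get i : ℝ) with hz
  have hzpos : ∀ i, 0 < z i := fun i => div_pos hnR (hpos i)
  -- D n = ∑ z i
  have hD : (arithDeriv n : ℝ) = ∑ i, z i := by
    rw [arithDeriv_eq_list_sum, ← hL, ← List.ofFn_getElem_eq_map, List.sum_ofFn]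
    push_cast
    refine Finset.sum_congr rfl fun i _ => ?_
    exact Nat.cast_div (hdvd i) (ne_of_gt (hpos i))
  -- product of z equals n^(k-1)
  have hprodL : ∏ i, (L.get i : ℝ) = (n : ℝ) := by
    have : (∏ i : Fin k, L.get i : ℕ) = n := by
      rw [← List.prod_ofFn, List.ofFn_get]
      exact Nat.prod_primeFactorsList hn0
    rw [← Nat.cast_prod, this]
  have hprodz : ∏ i, z i = (n : ℝ) ^ (k - 1) := by
    simp only [hz]
    rw [Finset.prod_div_distrib, Finset.prod_const, hprodL, Finset.card_univ,
      Fintype.card_fin]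
    rw [div_eq_iff (ne_of_gt hnR), ← pow_succ, Nat.sub_add_cancel hkpos]
  -- AM-GM
  have amgm := Real.geom_mean_le_arith_mean_weighted Finset.univ
      (fun _ : Fin k => 1 / (k:ℝ)) z
      (fun i _ => by positivity)
      (by rw [Finset.sum_const, Finset.card_univ, Fintype.card_fin, nsmul_eq_mul]
          field_simp)
      (fun i _ => (hzpos i).le)
  rw [Real.finset_prod_rpow _ _ (fun i _ => (hzpos i).le), hprodz] at amgm
  have hpow : ((n:ℝ) ^ (k - 1)) ^ (1 / (k:ℝ) : ℝ) = (n:ℝ) ^ (((k:ℝ) - 1) / k) := by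
    rw [← Real.rpow_natCast (n:ℝ) (k-1), ← Real.rpow_mul hnR.le]
    congr 1
    rw [Nat.cast_sub hkpos]
    push_cast
    ring
  rw [hpow] at amgm
  rw [hD]
  calc (k:ℝ) * (n:ℝ) ^ (((k:ℝ) - 1) / k)
      ≤ (k:ℝ) * ∑ i, (1 / (k:ℝ)) * z i := by
        exact mul_le_mul_of_nonneg_left amgm hkR.le
    _ = ∑ i, z i := by
        rw [← Finset.mul_sum, ← mul_assoc]
        field_simp
end

section
/- There exists exactly one function D : ℤ → ℤ with D(p) = 1 for every prime p, D(ab) = D(a)·b + a·D(b) for all integers a, b, and D(-x) = -D(x) for all integers x; its restriction to ℕ is the arithmetic derivative on ℕ. -/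
lemma arithDeriv_eq_sum (n : ℕ) :
    arithDeriv n = n.factorization.sum (fun p k => k * (n / p)) := by
  rw [Finsupp.sum, Nat.support_factorization]; rfl

lemma arithDeriv_zero : arithDeriv 0 = 0 := by simp [arithDeriv]

lemma arithDeriv_mul (a b : ℕ) :
    arithDeriv (a * b) = arithDeriv a * b + a * arithDeriv b := by
  rcases eq_or_ne a 0 with rfl | ha
  · simp [arithDeriv]
  rcases eq_or_ne b 0 with rfl | hb
  · simp [arithDeriv]
  rw [arithDeriv_eq_sum, Nat.factorization_mul ha hb,
    Finsupp.sum_add_index' (by intro p; simp) (by intro p k1 k2; ring)]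
  congr 1
  · rw [arithDeriv_eq_sum, Finsupp.sum, Finsupp.sum, Finset.sum_mul]
    refine Finset.sum_congr rfl fun p hp => ?_
    obtain ⟨c, rfl⟩ := Nat.dvd_of_mem_primeFactors (by rwa [← Nat.support_factorization])
    have hppos : 0 < p := (Nat.prime_of_mem_primeFactors (by
      rwa [← Nat.support_factorization])).pos
    rw [mul_assoc p c b, Nat.mul_div_cancel_left _ hppos,
      Nat.mul_div_cancel_left _ hppos, mul_assoc]
  · rw [arithDeriv_eq_sum, Finsupp.sum, Finsupp.sum, Finset.mul_sum]
    refine Finset.sum_congr rfl fun p hp => ?_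
    obtain ⟨c, rfl⟩ := Nat.dvd_of_mem_primeFactors (by rwa [← Nat.support_factorization])
    have hppos : 0 < p := (Nat.prime_of_mem_primeFactors (by
      rwa [← Nat.support_factorization])).pos
    rw [Nat.mul_div_assoc a (Dvd.intro c rfl), Nat.mul_div_cancel_left _ hppos]
    ring

lemma arithDeriv_prime {p : ℕ} (hp : p.Prime) : arithDeriv p = 1 := by
  simp [arithDeriv, hp.primeFactors, hp.factorization, Nat.div_self hp.pos]

noncomputable def Dz (x : ℤ) : ℤ := x.sign * (arithDeriv x.natAbs : ℤ)

lemma Dz_prime (p : ℕ) (hp : p.Prime) : Dz p = 1 := by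
  have : (0:ℤ) < (p:ℤ) := by exact_mod_cast hp.pos
  simp [Dz, arithDeriv_prime hp, Int.sign_eq_one_of_pos this]

lemma Dz_leibniz (a b : ℤ) : Dz (a * b) = Dz a * b + a * Dz b := by
  unfold Dz
  rw [Int.natAbs_mul, arithDeriv_mul, Int.sign_mul, Nat.cast_add, Nat.cast_mul, Nat.cast_mul]
  have ha := Int.sign_mul_natAbs a
  have hb := Int.sign_mul_natAbs b
  linear_combination (a.sign * (arithDeriv a.natAbs : ℤ)) * hb +
    (b.sign * (arithDeriv b.natAbs : ℤ)) * ha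

lemma Dz_neg (x : ℤ) : Dz (-x) = -Dz x := by
  simp [Dz, Int.sign_neg]

lemma D_eq_arithDeriv (D : ℤ → ℤ) (hp : ∀ p : ℕ, p.Prime → D p = 1)
    (hL : ∀ a b : ℤ, D (a * b) = D a * b + a * D b) :
    ∀ n : ℕ, D n = arithDeriv n := by
  intro n
  induction n using Nat.strong_induction_on with
  | _ n ih =>
    match n with
    | 0 =>
      have h := hL 0 0
      simp only [mul_zero, zero_mul, Nat.cast_zero] at h ⊢
      simp [arithDeriv]
      linarith
    | 1 =>
      have h := hL 1 1
      simp only [mul_one, one_mul, Nat.cast_one] at h ⊢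
      simp [arithDeriv]
      linarith
    | (m + 2) =>
      set n := m + 2 with hn
      have h2 : 2 ≤ n := by omega
      have hpn : n.minFac.Prime := Nat.minFac_prime (by omega)
      have hdvd : n.minFac ∣ n := Nat.minFac_dvd n
      obtain ⟨k, hk⟩ := hdvd
      have hk0 : 0 < k := by
        rcases Nat.eq_zero_or_pos k with h | h
        · subst h; omega
        · exact h
      have hklt : k < n := by
        have := hpn.two_le
        nlinarith
      have hkcast : (n : ℤ) = (n.minFac : ℤ) * (k : ℤ) := by exact_mod_cast hk
      have harith : arithDeriv n = k + n.minFac * arithDeriv k := by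
        conv_lhs => rw [hk]
        rw [arithDeriv_mul, arithDeriv_prime hpn, one_mul]
      rw [hkcast, hL, hp _ hpn, ih k hklt, harith]
      push_cast
      ring

/-- There is exactly one function `D : ℤ → ℤ` with `D p = 1` for primes, satisfying the
Leibniz rule, and odd; its restriction to `ℕ` is the arithmetic derivative on `ℕ`. -/
theorem stmt_6 :
    (∃! D : ℤ → ℤ, (∀ p : ℕ, p.Prime → D p = 1) ∧
      (∀ a b : ℤ, D (a * b) = D a * b + a * D b) ∧
      (∀ x : ℤ, D (-x) = -D x)) ∧
    (∀ D : ℤ → ℤ, ((∀ p : ℕ, p.Prime → D p = 1) ∧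
        (∀ a b : ℤ, D (a * b) = D a * b + a * D b) ∧
        (∀ x : ℤ, D (-x) = -D x)) →
      ∀ n : ℕ, D n = arithDeriv n) := by
  constructor
  · refine ⟨Dz, ⟨Dz_prime, Dz_leibniz, Dz_neg⟩, ?_⟩
    rintro D ⟨hp, hL, hneg⟩
    funext x
    have hD := D_eq_arithDeriv D hp hL
    have hDz := D_eq_arithDeriv Dz Dz_prime Dz_leibniz
    rcases Int.natAbs_eq x with h | h
    · rw [h, hD, hDz]
    · rw [h, hneg, Dz_neg, hD, hDz]
  · rintro D ⟨hp, hL, _⟩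
    exact D_eq_arithDeriv D hp hL
end

section
/- For every rational L there exists a rational x with 1/2 < x < 1 and D(x) ≥ L. -/
/-- The logarithmic arithmetic derivative `ld n = D n / n = Σ αᵢ / pᵢ` of a natural number. -/
def natLogDeriv (n : ℕ) : ℚ := ∑ p ∈ n.primeFactors, (n.factorization p : ℚ) / p

/-- The arithmetic derivative on `ℚ`: the unique function with `D p = 1` for primes
satisfying the Leibniz rule `D (x*y) = D x * y + x * D y`; explicitly
`D (± a/b) = ± (D a * b - a * D b) / b²` for coprime naturals `a`, `b`. -/
def ratArithDeriv (q : ℚ) : ℚ := q * (natLogDeriv q.num.natAbs - natLogDeriv q.den)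

lemma natLogDeriv_prime_pow {p : ℕ} (hp : p.Prime) (k : ℕ) (hk : k ≠ 0) :
    natLogDeriv (p ^ k) = (k : ℚ) / p := by
  unfold natLogDeriv
  rw [Nat.primeFactors_prime_pow hk hp, Finset.sum_singleton,
    Nat.Prime.factorization_pow hp]
  simp

/-- For every rational `L` there is a rational `x ∈ (1/2, 1)` with `D x ≥ L`. -/
theorem stmt_9 (L : ℚ) : ∃ x : ℚ, 1 / 2 < x ∧ x < 1 ∧ L ≤ ratArithDeriv x := by
  obtain ⟨m0, hm0⟩ := exists_nat_ge (6 * L + 3)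
  set m := m0 + 1 with hmdef
  have hm : 6 * L + 3 ≤ (m : ℚ) := by rw [hmdef]; push_cast; push_cast at hm0; linarith
  have hm1 : 1 ≤ m := Nat.le_add_left 1 m0
  have h3m : 3 ≤ 3 ^ m := Nat.le_self_pow (by omega) 3
  obtain ⟨p, pp, hp1, hp2⟩ := Nat.exists_prime_lt_and_le_two_mul (3 ^ m) (by positivity)
  have hp2' : p < 2 * 3 ^ m := by
    rcases lt_or_eq_of_le hp2 with h | h
    · exact h
    · exfalso
      have h2 : (2:ℕ) ∣ p := ⟨3 ^ m, h⟩
      rcases (pp.eq_one_or_self_of_dvd 2 h2) with h' | h' <;> omega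
  have hpne3 : 3 ≠ p := by omega
  set x : ℚ := (3 ^ m : ℚ) / (p : ℚ) with hx
  have hp0 : (0:ℤ) < (p:ℤ) := by exact_mod_cast pp.pos
  have hcop : Nat.Coprime ((3:ℤ)^m).natAbs ((p:ℤ)).natAbs := by
    simp only [Int.natAbs_pow, Int.natAbs_natCast]
    exact Nat.Coprime.pow_left _ ((Nat.coprime_primes (by norm_num) pp).mpr hpne3)
  have hnum : x.num = 3 ^ m := by
    have := Rat.num_div_eq_of_coprime hp0 hcop
    simpa [hx] using this
  have hden : (x.den : ℤ) = p := by
    have := Rat.den_div_eq_of_coprime hp0 hcop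
    simpa [hx] using this
  have hden' : x.den = p := by exact_mod_cast hden
  have hpQpos : (0:ℚ) < p := by exact_mod_cast pp.pos
  have h3Qpos : (0:ℚ) < (3:ℚ)^m := by positivity
  have hp1Q : (3:ℚ)^m < p := by exact_mod_cast hp1
  have hp2Q : (p:ℚ) < 2 * 3^m := by exact_mod_cast hp2'
  have hx_half : 1/2 < x := by
    rw [hx, lt_div_iff₀ hpQpos]; linarith
  have hx_one : x < 1 := by
    rw [hx, div_lt_one hpQpos]; exact hp1Q
  refine ⟨x, hx_half, hx_one, ?_⟩
  have hnatAbs : x.num.natAbs = 3 ^ m := by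
    rw [hnum]; simp [Int.natAbs_pow]
  have hD : ratArithDeriv x = x * ((m : ℚ)/3 - natLogDeriv p) := by
    unfold ratArithDeriv
    rw [hnatAbs, hden', natLogDeriv_prime_pow (by norm_num) m (by omega)]
    norm_num
  have hldp : natLogDeriv p = 1 / p := by
    unfold natLogDeriv
    rw [Nat.Prime.primeFactors pp, Finset.sum_singleton, pp.factorization_self]
    norm_num
  rw [hD, hldp]
  have hple : (1:ℚ)/p ≤ 1 := by
    rw [div_le_one hpQpos]; exact_mod_cast pp.one_le
  have hkey : 2 * L ≤ (m:ℚ)/3 - 1/p := by linarith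
  have hp3Q : (3:ℚ) ≤ p := by exact_mod_cast (by omega : 3 ≤ p)
  have h1p3 : (1:ℚ)/p ≤ 1/3 := by
    apply div_le_div_of_nonneg_left (by norm_num) (by norm_num) hp3Q
  have hm1Q : (1:ℚ) ≤ m := by exact_mod_cast hm1
  have hfac : (0:ℚ) ≤ (m:ℚ)/3 - 1/p := by linarith
  nlinarith [hx_half, hkey, hfac]
end

section
/- Let a, b, k be positive rationals with a < b. If for every rational L there exists x in the open interval (a, b) with D(x) ≥ L, then for every rational L there exists y in the open interval (ka, kb) with D(y) ≥ L. -/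
lemma natLogDeriv_eq (n : ℕ) :
    natLogDeriv n = n.factorization.sum (fun p k => (k : ℚ) / p) := by
  rw [natLogDeriv, Finsupp.sum, Nat.support_factorization]

lemma natLogDeriv_mul {m n : ℕ} (hm : m ≠ 0) (hn : n ≠ 0) :
    natLogDeriv (m * n) = natLogDeriv m + natLogDeriv n := by
  simp only [natLogDeriv_eq, Nat.factorization_mul hm hn]
  apply Finsupp.sum_add_index' <;> intros <;> push_cast <;> ring

lemma num_eq (s : ℚ) : (s.num : ℚ) = s * s.den := by
  exact (Rat.mul_den_eq_num s).symm

lemma ratLogDeriv_mul {q r : ℚ} (hq : q ≠ 0) (hr : r ≠ 0) :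
    natLogDeriv (q * r).num.natAbs - natLogDeriv (q * r).den =
      (natLogDeriv q.num.natAbs - natLogDeriv q.den) +
      (natLogDeriv r.num.natAbs - natLogDeriv r.den) := by
  have hqr : q * r ≠ 0 := mul_ne_zero hq hr
  have hZ : (q * r).num * ((q.den : ℤ) * (r.den : ℤ)) =
      q.num * r.num * ((q * r).den : ℤ) := by
    have : ((q * r).num : ℚ) * ((q.den : ℚ) * (r.den : ℚ)) =
        (q.num : ℚ) * (r.num : ℚ) * ((q * r).den : ℚ) := by
      rw [num_eq, num_eq q, num_eq r]; ring
    exact_mod_cast this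
  have key : (q * r).num.natAbs * (q.den * r.den) =
      q.num.natAbs * r.num.natAbs * (q * r).den := by
    have := congrArg Int.natAbs hZ
    simpa [Int.natAbs_mul] using this
  have hqn : q.num.natAbs ≠ 0 := by simpa using (Rat.num_ne_zero).2 hq
  have hrn : r.num.natAbs ≠ 0 := by simpa using (Rat.num_ne_zero).2 hr
  have hqrn : (q * r).num.natAbs ≠ 0 := by simpa using (Rat.num_ne_zero).2 hqr
  have hL := congrArg natLogDeriv key
  rw [natLogDeriv_mul hqrn (mul_ne_zero q.den_nz r.den_nz),
      natLogDeriv_mul q.den_nz r.den_nz,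
      natLogDeriv_mul (mul_ne_zero hqn hrn) (q * r).den_nz,
      natLogDeriv_mul hqn hrn] at hL
  linarith

lemma ratArithDeriv_mul {q r : ℚ} (hq : q ≠ 0) (hr : r ≠ 0) :
    ratArithDeriv (q * r) = ratArithDeriv q * r + q * ratArithDeriv r := by
  unfold ratArithDeriv
  rw [ratLogDeriv_mul hq hr]; ring

/-- If the open interval `(a, b)` of positive rationals contains elements of arbitrarily
large arithmetic derivative, then so does `(k*a, k*b)` for any positive rational `k`. -/
theorem stmt_11 (a b k : ℚ) (ha : 0 < a) (hb : 0 < b) (hk : 0 < k) (hab : a < b)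
    (h : ∀ L : ℚ, ∃ x : ℚ, a < x ∧ x < b ∧ L ≤ ratArithDeriv x) :
    ∀ L : ℚ, ∃ y : ℚ, k * a < y ∧ y < k * b ∧ L ≤ ratArithDeriv y := by
  intro L
  obtain ⟨x, h1, h2, h3⟩ := h ((L + |ratArithDeriv k| * b) / k)
  have hx0 : 0 < x := ha.trans h1
  refine ⟨k * x, mul_lt_mul_of_pos_left h1 hk, mul_lt_mul_of_pos_left h2 hk, ?_⟩
  rw [ratArithDeriv_mul (ne_of_gt hk) (ne_of_gt hx0)]
  have h4 : L + |ratArithDeriv k| * b ≤ k * ratArithDeriv x := by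
    rw [div_le_iff₀ hk] at h3; linarith [h3]
  have h5 : -( |ratArithDeriv k| * b) ≤ ratArithDeriv k * x := by
    nlinarith [abs_nonneg (ratArithDeriv k), neg_abs_le (ratArithDeriv k)]
  linarith
end

section
/- For every positive rational a and every rational L, there exists a rational x with a < x < a + 1 and D(x) ≥ L. -/
lemma natLogDeriv_two_pow {n : ℕ} (hn : n ≠ 0) : natLogDeriv (2 ^ n) = n / 2 := by
  unfold natLogDeriv
  rw [Nat.primeFactors_prime_pow hn Nat.prime_two, Finset.sum_singleton,
    Nat.Prime.factorization_pow Nat.prime_two, Finsupp.single_eq_same]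
  norm_num

lemma three_le_of_mem_primeFactors_odd {m p : ℕ} (hodd : Odd m) (hp : p ∈ m.primeFactors) :
    3 ≤ p := by
  have hpp := Nat.prime_of_mem_primeFactors hp
  have hdvd := Nat.dvd_of_mem_primeFactors hp
  rcases Nat.lt_or_ge p 3 with h | h
  · have h2 := hpp.two_le
    have : p = 2 := by omega
    subst this
    have := Nat.odd_iff.mp hodd
    omega
  · exact h

lemma three_pow_omega_le {m : ℕ} (hodd : Odd m) :
    3 ^ (∑ p ∈ m.primeFactors, m.factorization p) ≤ m := by
  have hm : m ≠ 0 := by rintro rfl; simp [← Nat.not_even_iff_odd] at hodd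
  conv_rhs => rw [← Nat.factorization_prod_pow_eq_self hm]
  rw [Finsupp.prod, Nat.support_factorization, ← Finset.prod_pow_eq_pow_sum]
  exact Finset.prod_le_prod' fun p hp =>
    Nat.pow_le_pow_left (three_le_of_mem_primeFactors_odd hodd hp) _

lemma natLogDeriv_le_of_odd {m : ℕ} (hodd : Odd m) :
    natLogDeriv m ≤ ((∑ p ∈ m.primeFactors, m.factorization p : ℕ) : ℚ) / 3 := by
  unfold natLogDeriv
  push_cast
  rw [Finset.sum_div]
  refine Finset.sum_le_sum fun p hp => ?_
  have h3 : (3 : ℚ) ≤ p := by exact_mod_cast three_le_of_mem_primeFactors_odd hodd hp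
  gcongr

/-- For every positive rational `a` and every rational `L` there is a rational
`x ∈ (a, a+1)` with `D x ≥ L`. -/
theorem stmt_13 (a : ℚ) (ha : 0 < a) (L : ℚ) :
    ∃ x : ℚ, a < x ∧ x < a + 1 ∧ L ≤ ratArithDeriv x := by
  obtain ⟨n₁, hn₁⟩ := pow_unbounded_of_one_lt (2 * a * (a + 1)) (by norm_num : (1:ℚ) < 2)
  obtain ⟨n₃, hn₃⟩ := pow_unbounded_of_one_lt (1 / a) (by norm_num : (1:ℚ) < 3 / 2)
  obtain ⟨n₂, hn₂⟩ := exists_nat_gt (6 * L / a)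
  set n := max (max n₁ n₃) (max n₂ 1) with hn_def
  have hn0 : n ≠ 0 := by positivity
  have h2 : 2 * a * (a + 1) < (2:ℚ) ^ n :=
    hn₁.trans_le (pow_le_pow_right₀ one_le_two (le_trans (le_max_left _ _) (le_max_left _ _)))
  have h3 : 1 / a < ((3:ℚ) / 2) ^ n :=
    hn₃.trans_le (pow_le_pow_right₀ (by norm_num) (le_trans (le_max_right _ _) (le_max_left _ _)))
  have h4 : 6 * L / a < (n : ℚ) := by
    calc 6 * L / a < (n₂ : ℚ) := hn₂
    _ ≤ n := by exact_mod_cast Nat.cast_le.mpr (le_trans (le_max_left _ _) (le_max_right _ _))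
  have h2n_pos : (0:ℚ) < 2 ^ n := by positivity
  have h3' : (2:ℚ) ^ n < a * 3 ^ n := by
    have h := (div_lt_iff₀ ha).mp h3
    have key : ((3:ℚ)/2) ^ n * 2 ^ n = 3 ^ n := by
      rw [div_pow]; field_simp
    nlinarith [h2n_pos]
  set lo : ℚ := 2 ^ n / (a + 1) with hlo_def
  have ha1 : (0:ℚ) < a + 1 := by linarith
  have hlo_pos : 0 ≤ lo := by positivity
  have hlo_mul : lo * (a + 1) = 2 ^ n := div_mul_cancel₀ _ (ne_of_gt ha1)
  set k := ⌊lo⌋₊ with hk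
  have hk1 : lo < (k:ℚ) + 1 := Nat.lt_floor_add_one lo
  have hk2 : (k:ℚ) ≤ lo := Nat.floor_le hlo_pos
  have hgap : (lo + 2) * a < 2 ^ n := by nlinarith [hlo_mul, h2, hlo_pos, ha, ha1]
  obtain ⟨m, hmodd, hm_lo, hm_le⟩ : ∃ m : ℕ, Odd m ∧ lo < m ∧ (m:ℚ) ≤ lo + 2 := by
    rcases Nat.even_or_odd (k + 1) with he | ho
    · exact ⟨k + 2, by exact he.add_one, by push_cast; linarith, by push_cast; linarith⟩
    · exact ⟨k + 1, ho, by push_cast; linarith, by push_cast; linarith⟩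
  have hm_pos : 0 < m := by rcases hmodd with ⟨t, ht⟩; omega
  have hmq_pos : (0:ℚ) < m := by exact_mod_cast hm_pos
  have hm_hi : a * m < 2 ^ n := by nlinarith [hm_le, hgap, ha]
  have hm_lo' : 2 ^ n < (a + 1) * m := by nlinarith [hm_lo, ha1, hlo_mul]
  have hm3 : m < 3 ^ n := by
    have hq : (m:ℚ) < 3 ^ n := by nlinarith [hm_hi, h3', ha]
    exact_mod_cast hq
  set x : ℚ := (2 ^ n : ℚ) / m with hx_def
  have hcop : Nat.Coprime (2 ^ n) m := Nat.Coprime.pow_left _ (Nat.coprime_two_left.mpr hmodd)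
  have hbx : (0:ℤ) < (m:ℤ) := by exact_mod_cast hm_pos
  have hx_eq : x = ((2 ^ n : ℤ) : ℚ) / ((m : ℤ) : ℚ) := by rw [hx_def]; push_cast; ring
  have hnum : x.num = 2 ^ n := by
    rw [hx_eq]
    exact Rat.num_div_eq_of_coprime hbx (by simpa [Int.natAbs_pow] using hcop)
  have hden : (x.den : ℤ) = (m : ℤ) := by
    rw [hx_eq]
    exact Rat.den_div_eq_of_coprime hbx (by simpa [Int.natAbs_pow] using hcop)
  have hden' : x.den = m := by exact_mod_cast hden
  have hnum' : x.num.natAbs = 2 ^ n := by rw [hnum]; simp [Int.natAbs_pow]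
  have hxa : a < x := (lt_div_iff₀ hmq_pos).mpr (by linarith [hm_hi])
  have hxb : x < a + 1 := (div_lt_iff₀ hmq_pos).mpr (by linarith [hm_lo'])
  have hld : natLogDeriv m ≤ (n : ℚ) / 3 := by
    have homega : (∑ p ∈ m.primeFactors, m.factorization p) ≤ n := by
      by_contra hcon
      push_neg at hcon
      have hb1 := three_pow_omega_le hmodd
      have hb2 : 3 ^ n < 3 ^ (∑ p ∈ m.primeFactors, m.factorization p) :=
        Nat.pow_lt_pow_right (by norm_num) hcon
      omega
    calc natLogDeriv m ≤ _ := natLogDeriv_le_of_odd hmodd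
    _ ≤ (n:ℚ)/3 := by gcongr
  refine ⟨x, hxa, hxb, ?_⟩
  unfold ratArithDeriv
  rw [hnum', hden', natLogDeriv_two_pow hn0]
  have h4' : 6 * L < (n:ℚ) * a := (div_lt_iff₀ ha).mp h4
  have hnn : (0:ℚ) ≤ (n:ℚ) := Nat.cast_nonneg n
  have hint1 : (0:ℚ) ≤ (x - a) * ((n:ℚ)/6) := mul_nonneg (by linarith) (by positivity)
  have hint2 : (0:ℚ) ≤ x * ((n:ℚ)/2 - natLogDeriv m - (n:ℚ)/6) :=
    mul_nonneg (by linarith) (by linarith [hld])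
  linarith [hint1, hint2, h4']
end

section
/- For all positive rationals a and c and every rational L, there exists a rational x with a < x < a + c and D(x) ≥ L. -/
lemma natLogDeriv_nonneg (n : ℕ) : 0 ≤ natLogDeriv n :=
  Finset.sum_nonneg fun p _ => by positivity

lemma natLogDeriv_prime {q : ℕ} (hq : q.Prime) : natLogDeriv q = 1 / q := by
  simp [natLogDeriv, hq.primeFactors, hq.factorization]

lemma natLogDeriv_two_pow_mul (k : ℕ) {s : ℕ} (hs : s ≠ 0) :
    (k : ℚ) / 2 ≤ natLogDeriv (2 ^ k * s) := by
  rcases Nat.eq_zero_or_pos k with rfl | hk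
  · simpa using natLogDeriv_nonneg s
  · have hn : 2 ^ k * s ≠ 0 := by positivity
    have h2 : 2 ∈ (2 ^ k * s).primeFactors :=
      Nat.mem_primeFactors.mpr ⟨Nat.prime_two,
        dvd_mul_of_dvd_left (dvd_pow_self 2 hk.ne') s, hn⟩
    have hfac : k ≤ (2 ^ k * s).factorization 2 := by
      rw [Nat.factorization_mul (by positivity) hs, Nat.Prime.factorization_pow Nat.prime_two]
      simp
    calc (k : ℚ) / 2 ≤ ((2 ^ k * s).factorization 2 : ℚ) / 2 := by
          have : (k : ℚ) ≤ ((2 ^ k * s).factorization 2 : ℚ) := by exact_mod_cast hfac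
          linarith
      _ ≤ natLogDeriv (2 ^ k * s) := by
          have := Finset.single_le_sum
            (f := fun p => ((2 ^ k * s).factorization p : ℚ) / p)
            (fun p _ => by positivity) h2
          simpa [natLogDeriv] using this

/-- For all positive rationals `a`, `c` and every rational `L` there is a rational
`x ∈ (a, a+c)` with `D x ≥ L`. -/
theorem stmt_14 (a c : ℚ) (ha : 0 < a) (hc : 0 < c) (L : ℚ) :
    ∃ x : ℚ, a < x ∧ x < a + c ∧ L ≤ ratArithDeriv x := by
  -- choose k
  set k : ℕ := max (⌈a⌉₊ + 1) (⌈2 * L / a + 2⌉₊ + 2) with hkdef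
  have hka : a < 2 ^ k := by
    have h1 : a ≤ (⌈a⌉₊ : ℚ) := Nat.le_ceil a
    have h2 : ((⌈a⌉₊ : ℕ) : ℚ) < 2 ^ (⌈a⌉₊ + 1) := by
      exact_mod_cast (Nat.lt_two_pow_self (n := ⌈a⌉₊)) |>.trans_le
        (Nat.pow_le_pow_right (by norm_num) (Nat.le_succ _))
    have h3 : (2 : ℚ) ^ (⌈a⌉₊ + 1) ≤ 2 ^ k :=
      pow_le_pow_right₀ (by norm_num) (le_max_left _ _)
    linarith
  have hkL : 2 * L / a + 2 ≤ (k : ℚ) := by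
    have h1 : 2 * L / a + 2 ≤ (⌈2 * L / a + 2⌉₊ : ℚ) + 2 := by
      have := Nat.le_ceil (2 * L / a + 2); linarith
    have h2 : ((⌈2 * L / a + 2⌉₊ + 2 : ℕ) : ℚ) ≤ (k : ℚ) := by
      exact_mod_cast le_max_right (⌈a⌉₊ + 1) (⌈2 * L / a + 2⌉₊ + 2)
    push_cast at h2
    linarith
  have hk2 : (2 : ℚ) ≤ (k : ℚ) := by
    have : (⌈2 * L / a + 2⌉₊ + 2 : ℕ) ≤ k := le_max_right _ _
    have : (2 : ℕ) ≤ k := le_trans (by omega) this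
    exact_mod_cast this
  have hLd : L / a ≤ (k : ℚ) / 2 - 1 := by
    have h : 2 * L / a = 2 * (L / a) := by ring
    rw [h] at hkL
    linarith
  -- choose a large prime q
  have hε : 0 < 1 - a / 2 ^ k := by
    have : a / 2 ^ k < 1 := (div_lt_one (by positivity)).mpr hka
    linarith
  obtain ⟨q, hqN, hq⟩ := Nat.exists_infinite_primes
    (⌈(2 ^ k : ℚ) / c⌉₊ + ⌈1 / (1 - a / 2 ^ k)⌉₊ + 3)
  have hq0 : (0 : ℚ) < q := by
    have : 0 < q := hq.pos
    exact_mod_cast this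
  have hq3 : 3 ≤ q := by omega
  have hqc : (2 ^ k : ℚ) / q < c := by
    have h1 : (2 ^ k : ℚ) / c ≤ (⌈(2 ^ k : ℚ) / c⌉₊ : ℚ) := Nat.le_ceil _
    have h2 : ((⌈(2 ^ k : ℚ) / c⌉₊ + 1 : ℕ) : ℚ) ≤ (q : ℚ) := by
      exact_mod_cast (by omega : ⌈(2 ^ k : ℚ) / c⌉₊ + 1 ≤ q)
    push_cast at h2
    have : (2 ^ k : ℚ) / c < q := by linarith
    rw [div_lt_iff₀ hc] at this
    rw [div_lt_iff₀ hq0]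
    linarith
  have hqε : 1 < (q : ℚ) * (1 - a / 2 ^ k) := by
    have h1 : 1 / (1 - a / 2 ^ k) ≤ (⌈1 / (1 - a / 2 ^ k)⌉₊ : ℚ) := Nat.le_ceil _
    have h2 : ((⌈1 / (1 - a / 2 ^ k)⌉₊ + 1 : ℕ) : ℚ) ≤ (q : ℚ) := by
      exact_mod_cast (by omega : ⌈1 / (1 - a / 2 ^ k)⌉₊ + 1 ≤ q)
    push_cast at h2
    have h3 : 1 / (1 - a / 2 ^ k) < (q : ℚ) := by linarith
    rw [div_lt_iff₀ hε] at h3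
    linarith
  -- choose s
  have htpos : (0 : ℚ) < 2 ^ k := by positivity
  obtain ⟨s, hs0, hfl, hfl'⟩ : ∃ s : ℕ, s ≠ 0 ∧ a * q / 2 ^ k < (s : ℚ) ∧
      (s : ℚ) ≤ a * q / 2 ^ k + 1 := by
    refine ⟨⌊a * q / 2 ^ k⌋₊ + 1, by omega, ?_, ?_⟩
    · have := Nat.lt_floor_add_one (a * (q : ℚ) / 2 ^ k)
      push_cast
      linarith
    · have := Nat.floor_le (show (0:ℚ) ≤ a * q / 2 ^ k by positivity)
      push_cast
      linarith
  have hsq : s < q := by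
    have : (s : ℚ) < q := by
      have : a * q / 2 ^ k + 1 < q := by
        have : (q : ℚ) * (a / 2 ^ k) = a * q / 2 ^ k := by ring
        nlinarith
      linarith
    exact_mod_cast this
  -- the witness
  set x : ℚ := ((2 ^ k * s : ℕ) : ℚ) / ((q : ℕ) : ℚ) with hxdef
  have hcop : Nat.Coprime (2 ^ k * s) q := by
    have : ¬ q ∣ 2 ^ k * s := by
      intro hdvd
      rcases (Nat.Prime.dvd_mul hq).mp hdvd with h | h
      · have := Nat.Prime.dvd_of_dvd_pow hq h
        have := Nat.le_of_dvd (by norm_num) this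
        omega
      · have := Nat.le_of_dvd (Nat.pos_of_ne_zero hs0) h
        omega
    exact Nat.Coprime.symm ((Nat.Prime.coprime_iff_not_dvd hq).mpr this)
  have hnum : x.num = ((2 ^ k * s : ℕ) : ℤ) := by
    rw [hxdef]
    rw [show (((2 ^ k * s : ℕ) : ℚ)) = (((2 ^ k * s : ℕ) : ℤ) : ℚ) by push_cast; ring,
        show (((q : ℕ) : ℚ)) = (((q : ℕ) : ℤ) : ℚ) by push_cast; ring]
    apply Rat.num_div_eq_of_coprime (by exact_mod_cast hq.pos)
    simp only [Int.natAbs_natCast]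
    exact hcop
  have hden : (x.den : ℤ) = (q : ℤ) := by
    rw [hxdef]
    rw [show (((2 ^ k * s : ℕ) : ℚ)) = (((2 ^ k * s : ℕ) : ℤ) : ℚ) by push_cast; ring,
        show (((q : ℕ) : ℚ)) = (((q : ℕ) : ℤ) : ℚ) by push_cast; ring]
    apply Rat.den_div_eq_of_coprime (by exact_mod_cast hq.pos)
    simp only [Int.natAbs_natCast]
    exact hcop
  have hdenq : x.den = q := by exact_mod_cast hden
  have hnumabs : x.num.natAbs = 2 ^ k * s := by rw [hnum, Int.natAbs_natCast]
  have hax : a < x := by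
    rw [hxdef, lt_div_iff₀ hq0]
    push_cast
    rw [div_lt_iff₀ htpos] at hfl
    nlinarith
  have hxc : x < a + c := by
    rw [hxdef, div_lt_iff₀ hq0]
    push_cast
    have h1 : (s : ℚ) * 2 ^ k ≤ a * q + 2 ^ k := by
      have := mul_le_mul_of_nonneg_right hfl' (le_of_lt htpos)
      calc (s : ℚ) * 2 ^ k ≤ (a * q / 2 ^ k + 1) * 2 ^ k := this
        _ = a * q + 2 ^ k := by field_simp
    rw [div_lt_iff₀ hq0] at hqc
    nlinarith
  refine ⟨x, hax, hxc, ?_⟩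
  rw [ratArithDeriv, hnumabs, hdenq, natLogDeriv_prime hq]
  have hld : (k : ℚ) / 2 ≤ natLogDeriv (2 ^ k * s) := natLogDeriv_two_pow_mul k hs0
  have hqinv : (1 : ℚ) / q ≤ 1 := by
    rw [div_le_one hq0]; exact_mod_cast hq.one_lt.le
  have hd1 : (k : ℚ) / 2 - 1 ≤ natLogDeriv (2 ^ k * s) - 1 / q := by linarith
  have hd0 : (0 : ℚ) ≤ (k : ℚ) / 2 - 1 := by linarith
  have hLa : L ≤ a * ((k : ℚ) / 2 - 1) := by
    rw [div_le_iff₀ ha] at hLd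
    linarith [hLd]
  calc L ≤ a * ((k : ℚ) / 2 - 1) := hLa
    _ ≤ x * (natLogDeriv (2 ^ k * s) - 1 / q) := by
        apply mul_le_mul (le_of_lt hax) hd1 hd0 (by linarith)
end

section
/- For every positive natural number a, Λ(2^a) = 2^a; equivalently, for every natural number m < 2^a one has D(m) < D(2^a) = a · 2^{a-1}. -/
/-- `Λ n` is the smallest `m ≤ n` such that `D m = max (D 0, D 1, …, D n)`. -/
noncomputable def arithLambda (n : ℕ) : ℕ := sInf {m : ℕ | m ≤ n ∧ ∀ j ≤ n, arithDeriv j ≤ arithDeriv m}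

lemma pow_bigOmega_le (n : ℕ) (hn : n ≠ 0) :
    2 ^ (n.factorization.sum fun _ k => k) ≤ n := by
  conv_rhs => rw [← Nat.factorization_prod_pow_eq_self hn]
  rw [Finsupp.sum, Finsupp.prod, ← Finset.prod_pow_eq_pow_sum]
  exact Finset.prod_le_prod (by simp) (fun p hp => Nat.pow_le_pow_left
    (Nat.Prime.two_le (Nat.prime_of_mem_primeFactors (by simpa using hp))) _)

lemma arithDeriv_le (n : ℕ) :
    arithDeriv n ≤ (n.factorization.sum fun _ k => k) * (n / 2) := by
  rw [arithDeriv, Finsupp.sum, Nat.support_factorization, Finset.sum_mul]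
  exact Finset.sum_le_sum fun p hp => Nat.mul_le_mul_left _
    (Nat.div_le_div_left (Nat.Prime.two_le (Nat.prime_of_mem_primeFactors hp)) two_pos)

lemma arithDeriv_two_pow (a : ℕ) (ha : 1 ≤ a) :
    arithDeriv (2 ^ a) = a * 2 ^ (a - 1) := by
  rw [arithDeriv, Nat.primeFactors_prime_pow (by omega) Nat.prime_two]
  simp [Nat.Prime.factorization_pow, Nat.prime_two, Nat.pow_div ha (by norm_num : 0 < 2)]

lemma arithDeriv_lt (a : ℕ) (ha : 1 ≤ a) (m : ℕ) (hm : m < 2 ^ a) :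
    arithDeriv m < a * 2 ^ (a - 1) := by
  have hb : 1 ≤ 2 ^ (a - 1) := Nat.one_le_two_pow
  rcases eq_or_ne m 0 with rfl | hm0
  · have : arithDeriv 0 = 0 := by simp [arithDeriv]
    rw [this]
    exact Nat.mul_pos ha hb
  · have hΩ : (m.factorization.sum fun _ k => k) ≤ a - 1 := by
      have h1 := pow_bigOmega_le m hm0
      have h2 : 2 ^ (m.factorization.sum fun _ k => k) < 2 ^ a := lt_of_le_of_lt h1 hm
      have := (Nat.pow_lt_pow_iff_right (by norm_num : 1 < 2)).mp h2
      omega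
    have hdiv : m / 2 ≤ 2 ^ (a - 1) - 1 := by
      have h2a : 2 ^ a = 2 * 2 ^ (a - 1) := by
        rw [← pow_succ']
        congr 1
        omega
      omega
    calc arithDeriv m ≤ (m.factorization.sum fun _ k => k) * (m / 2) := arithDeriv_le m
      _ ≤ (a - 1) * (2 ^ (a - 1) - 1) := Nat.mul_le_mul hΩ hdiv
      _ ≤ (a - 1) * 2 ^ (a - 1) := Nat.mul_le_mul_left _ (by omega)
      _ < a * 2 ^ (a - 1) := (Nat.mul_lt_mul_right hb).mpr (by omega)

/-- For every positive `a`, `Λ (2^a) = 2^a`; equivalently every `m < 2^a` has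
`D m < D (2^a) = a * 2^(a-1)`. -/
theorem stmt_17 (a : ℕ) (ha : 1 ≤ a) :
    arithLambda (2 ^ a) = 2 ^ a ∧
    (∀ m : ℕ, m < 2 ^ a → arithDeriv m < arithDeriv (2 ^ a)) ∧
    arithDeriv (2 ^ a) = a * 2 ^ (a - 1) := by
  have hD : arithDeriv (2 ^ a) = a * 2 ^ (a - 1) := arithDeriv_two_pow a ha
  have hlt : ∀ m : ℕ, m < 2 ^ a → arithDeriv m < arithDeriv (2 ^ a) := by
    intro m hm; rw [hD]; exact arithDeriv_lt a ha m hm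
  refine ⟨?_, hlt, hD⟩
  have hmem : 2 ^ a ∈ {m : ℕ | m ≤ 2 ^ a ∧ ∀ j ≤ 2 ^ a, arithDeriv j ≤ arithDeriv m} := by
    refine ⟨le_refl _, fun j hj => ?_⟩
    rcases lt_or_eq_of_le hj with h | h
    · exact (hlt j h).le
    · rw [h]
  have hinf := Nat.sInf_mem ⟨2 ^ a, hmem⟩
  obtain ⟨h1, h2⟩ := hinf
  rcases lt_or_eq_of_le h1 with h | h
  · exact absurd (h2 (2 ^ a) le_rfl) (not_le_of_gt (hlt _ h))
  · exact h
end

section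
/- For every natural number m there exists a natural number N such that for every natural number n ≥ N, 2^m divides Λ(n). -/
lemma aux_pow2 (b : ℕ) (hb : 1 ≤ b) : arithDeriv (2 ^ b) = b * 2 ^ (b - 1) := by
  have h2 : Nat.Prime 2 := Nat.prime_two
  rw [arithDeriv, Nat.primeFactors_prime_pow (by omega) h2]
  simp [h2.factorization_pow]
  rw [show (2:ℕ)^b = 2 * 2^(b-1) by rw [← pow_succ']; congr 1; omega]
  rw [Nat.mul_div_cancel_left _ (by norm_num)]
  exact Or.inl rfl

lemma aux_odd_terms (j : ℕ) :
    ∑ p ∈ j.primeFactors.erase 2, 6 * (j.factorization p * (j / p)) ≤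
      j * (2 * ∑ p ∈ j.primeFactors.erase 2, j.factorization p) := by
  have key : ∀ p ∈ j.primeFactors.erase 2,
      6 * (j.factorization p * (j / p)) ≤ j * (2 * j.factorization p) := by
    intro p hp
    have hp' := Finset.mem_of_mem_erase hp
    have hpprime : p.Prime := Nat.prime_of_mem_primeFactors hp'
    have hp2 : p ≠ 2 := Finset.ne_of_mem_erase hp
    have hp3 : 3 ≤ p := by have := hpprime.two_le; omega
    have hdiv : j / p ≤ j / 3 := Nat.div_le_div_left hp3 (by norm_num)
    have h3 : 3 * (j / 3) ≤ j := Nat.mul_div_le j 3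
    calc 6 * (j.factorization p * (j / p)) = (2 * j.factorization p) * (3 * (j/p)) := by ring
      _ ≤ (2 * j.factorization p) * (3 * (j/3)) :=
          Nat.mul_le_mul_left _ (Nat.mul_le_mul_left _ hdiv)
      _ ≤ (2 * j.factorization p) * j := Nat.mul_le_mul_left _ h3
      _ = j * (2 * j.factorization p) := by ring
  calc ∑ p ∈ j.primeFactors.erase 2, 6 * (j.factorization p * (j / p))
      ≤ ∑ p ∈ j.primeFactors.erase 2, j * (2 * j.factorization p) := Finset.sum_le_sum key
    _ = j * (2 * ∑ p ∈ j.primeFactors.erase 2, j.factorization p) := by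
        rw [← Finset.mul_sum, ← Finset.mul_sum]

lemma aux_bound (j : ℕ) :
    6 * arithDeriv j ≤ j * (3 * j.factorization 2 +
      2 * ∑ p ∈ j.primeFactors.erase 2, j.factorization p) := by
  rw [arithDeriv, Finset.mul_sum, mul_add]
  by_cases h2 : 2 ∈ j.primeFactors
  · rw [← Finset.add_sum_erase _ _ h2]
    apply Nat.add_le_add
    · have h22 : 2 * (j / 2) ≤ j := Nat.mul_div_le j 2
      calc 6 * (j.factorization 2 * (j / 2)) = (3 * j.factorization 2) * (2 * (j/2)) := by ring
        _ ≤ (3 * j.factorization 2) * j := Nat.mul_le_mul_left _ h22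
        _ = j * (3 * j.factorization 2) := by ring
    · exact aux_odd_terms j
  · have ha : j.factorization 2 = 0 := by
      have : 2 ∉ j.factorization.support := by rwa [Nat.support_factorization]
      exact Finsupp.notMem_support_iff.mp this
    have herase : j.primeFactors.erase 2 = j.primeFactors := Finset.erase_eq_of_notMem h2
    rw [ha]
    simp only [mul_zero, zero_add]
    rw [herase]
    have := aux_odd_terms j
    rwa [herase] at this

lemma aux_size (j : ℕ) (hj : j ≠ 0) :
    2 ^ j.factorization 2 * 3 ^ (∑ p ∈ j.primeFactors.erase 2, j.factorization p) ≤ j := by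
  have hfac := Nat.factorization_prod_pow_eq_self hj
  have hodd : 3 ^ (∑ p ∈ j.primeFactors.erase 2, j.factorization p) ≤
      ∏ p ∈ j.primeFactors.erase 2, p ^ j.factorization p := by
    rw [← Finset.prod_pow_eq_pow_sum]
    apply Finset.prod_le_prod'
    intro p hp
    have hpprime : p.Prime := Nat.prime_of_mem_primeFactors (Finset.mem_of_mem_erase hp)
    have hp2 : p ≠ 2 := Finset.ne_of_mem_erase hp
    have hp3 : 3 ≤ p := by have := hpprime.two_le; omega
    exact Nat.pow_le_pow_left hp3 _
  by_cases h2 : 2 ∈ j.primeFactors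
  · have := Finset.mul_prod_erase _ (fun p => p ^ j.factorization p) h2
    calc 2 ^ j.factorization 2 * 3 ^ (∑ p ∈ j.primeFactors.erase 2, j.factorization p)
        ≤ 2 ^ j.factorization 2 * ∏ p ∈ j.primeFactors.erase 2, p ^ j.factorization p :=
          Nat.mul_le_mul_left _ hodd
      _ = ∏ p ∈ j.primeFactors, p ^ j.factorization p := this
      _ = j := hfac
  · have ha : j.factorization 2 = 0 := by
      have : 2 ∉ j.factorization.support := by rwa [Nat.support_factorization]
      exact Finsupp.notMem_support_iff.mp this
    have herase : j.primeFactors.erase 2 = j.primeFactors := Finset.erase_eq_of_notMem h2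
    rw [ha, pow_zero, one_mul, herase]
    calc 3 ^ (∑ p ∈ j.primeFactors, j.factorization p)
        ≤ ∏ p ∈ j.primeFactors, p ^ j.factorization p := by rwa [herase] at hodd
      _ = j := hfac

/-- For every `m` there is `N` such that `2^m ∣ Λ n` for all `n ≥ N`. -/
theorem stmt_18 (m : ℕ) : ∃ N : ℕ, ∀ n : ℕ, N ≤ n → 2 ^ m ∣ arithLambda n := by
  refine ⟨2 ^ (10*m+4), fun n hn => ?_⟩
  have hn1 : 1 ≤ n := le_trans Nat.one_le_two_pow hn
  have hne : {k : ℕ | k ≤ n ∧ ∀ j ≤ n, arithDeriv j ≤ arithDeriv k}.Nonempty := by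
    obtain ⟨k, hk, hmax⟩ := Finset.exists_max_image (Finset.range (n+1)) arithDeriv
      ⟨0, by simp⟩
    exact ⟨k, Nat.lt_succ_iff.mp (Finset.mem_range.mp hk),
      fun j hj => hmax j (Finset.mem_range.mpr (Nat.lt_succ_iff.mpr hj))⟩
  have hL := Nat.sInf_mem hne
  set L := arithLambda n with hLdef
  have hLmem : L ∈ {k : ℕ | k ≤ n ∧ ∀ j ≤ n, arithDeriv j ≤ arithDeriv k} := hL
  obtain ⟨hLn, hLmax⟩ := hLmem
  set b := Nat.log 2 n with hb
  have hble : 2 ^ b ≤ n := Nat.pow_log_le_self 2 (by omega)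
  have hblt : n < 2 ^ (b+1) := Nat.lt_pow_succ_log_self (by norm_num) n
  have hbge : 10*m+4 ≤ b := (Nat.le_log_iff_pow_le (by norm_num) (by omega)).mpr hn
  have hb1 : 1 ≤ b := by omega
  have hDb : b * 2^(b-1) ≤ arithDeriv L := aux_pow2 b hb1 ▸ hLmax _ hble
  set a := L.factorization 2 with ha
  set w := ∑ p ∈ L.primeFactors.erase 2, L.factorization p with hw
  have hL0 : L ≠ 0 := by
    intro h
    have h0 : arithDeriv 0 = 0 := by simp [arithDeriv]
    rw [h, h0] at hDb
    have hpos : 0 < 2^(b-1) := Nat.pow_pos (by norm_num)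
    have : 0 < b * 2^(b-1) := Nat.mul_pos (by omega) hpos
    omega
  have h1 : 6 * b ≤ 12*a + 8*w := by
    have c1 : 6 * (b * 2^(b-1)) ≤ 6 * arithDeriv L := Nat.mul_le_mul_left _ hDb
    have c2 := aux_bound L
    have c3 : L * (3*a+2*w) ≤ 2^(b+1) * (3*a+2*w) :=
      Nat.mul_le_mul_right _ (le_of_lt (lt_of_le_of_lt hLn hblt))
    have c5 : (6*b) * 2^(b-1) ≤ (12*a+8*w) * 2^(b-1) := by
      calc (6*b)*2^(b-1) = 6*(b*2^(b-1)) := by ring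
        _ ≤ 2^(b+1)*(3*a+2*w) := c1.trans (c2.trans c3)
        _ = (12*a+8*w)*2^(b-1) := by
            rw [show b+1=(b-1)+2 by omega, pow_add]; ring
    have hpos : 0 < 2^(b-1) := Nat.pow_pos (by norm_num)
    exact Nat.le_of_mul_le_mul_right c5 hpos
  have h2 : 2*a + 3*w ≤ 2*b + 1 := by
    have hsz := aux_size L hL0
    have e1 : 2^(2*a+3*w) ≤ L^2 := by
      calc 2^(2*a+3*w) = (2^a)^2 * (2^3)^w := by
            rw [← pow_mul, ← pow_mul, ← pow_add]; congr 1; ring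
        _ ≤ (2^a)^2 * (3^2)^w := by
            apply Nat.mul_le_mul_left
            exact Nat.pow_le_pow_left (by norm_num) _
        _ = (2^a*3^w)^2 := by
            rw [mul_pow]; congr 1; rw [← pow_mul, ← pow_mul, Nat.mul_comm]
        _ ≤ L^2 := Nat.pow_le_pow_left hsz 2
    have e2 : L^2 < 2^(2*b+2) := by
      calc L^2 ≤ n^2 := Nat.pow_le_pow_left hLn 2
        _ < (2^(b+1))^2 := by
            apply Nat.pow_lt_pow_left hblt (by norm_num)
        _ = 2^(2*b+2) := by rw [← pow_mul]; ring_nf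
    have := lt_of_le_of_lt e1 e2
    have := (Nat.pow_lt_pow_iff_right (by norm_num : 1 < 2)).mp this
    omega
  have hma : m ≤ a := by omega
  exact dvd_trans (pow_dvd_pow 2 hma) (Nat.ordProj_dvd L 2)
end
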